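/- arXiv:1905.03478 — 2 statements merged into one kernel-verified Lean document; each statement's English description precedes it below -/
import Mathlib

section
/- A morphism of schemes f : X → Y is a universal homeomorphism if and only if it is integral, surjective, and radicial (universally injective). -/
open CategoryTheory AlgebraicGeometry

namespace UnivHomeoAux

open CategoryTheory.Limits MorphismProperty Polynomial TopologicalSpace

noncomputable section

universe u

/-- The square `R → S, R → R[X], S → S[X], R[X] → S[X]` is a pushout in `CommRingCat`. -/
lemma isPushout_polynomialC {R S : CommRingCat.{u}} (φ : R ⟶ S) :
    IsPushout φ (CommRingCat.ofHom (Polynomial.C : R →+* Polynomial R))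
      (CommRingCat.ofHom (Polynomial.C : S →+* Polynomial S))
      (CommRingCat.ofHom (Polynomial.mapRingHom φ.hom) :
        CommRingCat.of (Polynomial R) ⟶ CommRingCat.of (Polynomial S)) := by
  have w : φ ≫ CommRingCat.ofHom (Polynomial.C : S →+* Polynomial S) =
      CommRingCat.ofHom (Polynomial.C : R →+* Polynomial R) ≫
        CommRingCat.ofHom (Polynomial.mapRingHom φ.hom) := by
    ext r
    simp [Polynomial.map_C]
  refine (IsPushout.of_isColimit' ⟨w⟩ ?_)
  refine PushoutCocone.IsColimit.mk _ (fun s => CommRingCat.ofHom (Polynomial.eval₂RingHom s.inl.hom (s.inr X))) ?_ ?_ ?_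
  · intro s
    ext x
    exact Polynomial.eval₂_C _ _
  · intro s
    apply CommRingCat.hom_ext
    apply Polynomial.ringHom_ext
    · intro a
      have := congrArg (fun (ψ : R ⟶ s.pt) => ψ a) s.condition
      simpa [Polynomial.map_C] using this
    · simp [Polynomial.map_X]
  · intro s m h₁ h₂
    apply CommRingCat.hom_ext
    apply Polynomial.ringHom_ext
    · intro a
      have := congrArg (fun (ψ : S ⟶ s.pt) => ψ a) h₁
      simpa using this
    · have := congrArg (fun (ψ : CommRingCat.of (Polynomial R) ⟶ s.pt) => ψ X) h₂
      simpa [Polynomial.map_X] using this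

/-- If `Spec.map φ` is universally closed, then `φ` is integral. -/
lemma isIntegral_of_universallyClosed {R S : CommRingCat.{u}} (φ : R ⟶ S)
    (h : UniversallyClosed (Spec.map φ)) : RingHom.IsIntegral φ.hom := by
  apply PrimeSpectrum.isIntegral_of_isClosedMap_comap_mapRingHom
  exact h.out (Spec.map (CommRingCat.ofHom (Polynomial.C : S →+* Polynomial S)))
    (Spec.map (CommRingCat.ofHom (Polynomial.C : R →+* Polynomial R)))
    (Spec.map (CommRingCat.ofHom (Polynomial.mapRingHom φ.hom)))
    (isPullback_SpecMap_of_isPushout _ _ _ _ (isPushout_polynomialC φ)).flip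

/-- An affine universally closed morphism is integral. (Stacks 01WM) -/
theorem isIntegralHom_of_isAffineHom_of_universallyClosed {X Y : Scheme.{u}} (f : X ⟶ Y)
    [IsAffineHom f] [UniversallyClosed f] : IsIntegralHom f := by
  exact IsIntegralHom.iff_universallyClosed_and_isAffineHom.mpr ⟨‹_›, ‹_›⟩

/-- An integral morphism is topologically a closed map. -/
theorem isClosedMap_of_isIntegralHom {X Y : Scheme.{u}} (f : X ⟶ Y)
    [hf : IsIntegralHom f] : IsClosedMap f.base := by
  exact f.isClosedMap

/-- An integral morphism is universally closed. -/
theorem universallyClosed_of_isIntegralHom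
    {X Y : Scheme.{u}} (f : X ⟶ Y) (hf : IsIntegralHom f) : UniversallyClosed f := by
  constructor
  intro X' Y' i₁ i₂ f' hpb
  have : IsIntegralHom f' := MorphismProperty.of_isPullback hpb.flip hf
  exact isClosedMap_of_isIntegralHom f'

/-- The target of a homeomorphism of schemes with affine target is affine. -/
theorem isAffine_of_isHomeomorph {X Y : Scheme.{u}} (f : X ⟶ Y) [IsAffine Y]
    (h : IsHomeomorph f.base) : IsAffine X := by
  classical
  let T : Set Γ(Y, ⊤) := {g | IsAffineOpen (X.basicOpen (f.app ⊤ g))}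
  have hcov : ∀ y : Y, ∃ g ∈ T, y ∈ Y.basicOpen g := by
    intro y
    obtain ⟨x, hx⟩ := h.surjective y
    obtain ⟨U, hUaff, hxU, -⟩ := Opens.isBasis_iff_nbhd.mp X.isBasis_affineOpens
      (show x ∈ (⊤ : X.Opens) from trivial)
    have hC : IsClosed (f.base '' (↑U)ᶜ) := h.isClosedMap _ U.isOpen.isClosed_compl
    have hyC : y ∉ f.base '' (↑U)ᶜ := by
      rintro ⟨x', hx', hfx'⟩
      have hxx : x' = x := h.injective (hfx'.trans hx.symm)
      exact hx' (hxx ▸ hxU)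
    obtain ⟨V, ⟨g, rfl⟩, hyV, hVle⟩ := Opens.isBasis_iff_nbhd.mp (isBasis_basicOpen Y)
      (show y ∈ ⟨(f.base '' (↑U)ᶜ)ᶜ, hC.isOpen_compl⟩ from hyC)
    refine ⟨g, ?_, hyV⟩
    have hsub : X.basicOpen (f.app ⊤ g) ≤ U := by
      rw [← Scheme.preimage_basicOpen]
      intro x' hx'
      by_contra hx'U
      exact hVle hx' ⟨x', hx'U, rfl⟩
    have := hUaff.basicOpen (X.presheaf.map (homOfLE (le_top : U ≤ ⊤)).op (f.app ⊤ g))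
    erw [X.basicOpen_res, inf_eq_right.mpr hsub] at this; exact this
  have hspan : Ideal.span T = ⊤ := by
    rw [← IsAffineOpen.iSup_basicOpen_eq_self_iff (isAffineOpen_top Y), eq_top_iff]
    rintro y -
    obtain ⟨g, hg, hy⟩ := hcov y
    exact Opens.mem_iSup.mpr ⟨⟨g, hg⟩, hy⟩
  apply isAffine_of_isAffineOpen_basicOpen ((f.app ⊤) '' T)
  · have hm := Ideal.map_span (f.app ⊤).hom T
    rw [hspan, Ideal.map_top] at hm
    exact hm.symm
  · rintro _ ⟨g, hg, rfl⟩
    exact hg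

/-- A universal homeomorphism is an affine morphism. (Stacks 04DE) -/
theorem isAffineHom_of_universally_isHomeomorph {X Y : Scheme.{u}} (f : X ⟶ Y)
    (hf : (topologically @IsHomeomorph).universally f) : IsAffineHom f := by
  constructor
  intro U hU
  have hres : (topologically @IsHomeomorph).universally (f ∣_ U) :=
    MorphismProperty.of_isPullback (P := (topologically @IsHomeomorph).universally)
      (isPullback_morphismRestrict f U).flip hf
  have : IsAffine U := hU
  exact isAffine_of_isHomeomorph (f ∣_ U) (hres _ _ _ IsPullback.of_id_snd)

end

end UnivHomeoAux

open UnivHomeoAux MorphismProperty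

/-- A morphism of schemes is a universal homeomorphism if and only if it is
integral, surjective and radicial (universally injective). -/
theorem universal_homeomorphism_iff_integral_surjective_radicial
    {X Y : Scheme} (f : X ⟶ Y) :
    (MorphismProperty.universally
        (topologically fun {α β} [TopologicalSpace α] [TopologicalSpace β]
          (g : α → β) => IsHomeomorph g)) f ↔
      IsIntegralHom f ∧ Surjective f ∧ UniversallyInjective f := by
  constructor
  · intro H
    have H' : (topologically @IsHomeomorph).universally f := H
    have hsurj : Surjective f := ⟨(H' _ _ _ IsPullback.of_id_snd).surjective⟩
    have hclosed : UniversallyClosed f :=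
      ⟨universally_mono (fun _ _ g hg => hg.isClosedMap) f H'⟩
    have hinj : UniversallyInjective f :=
      ⟨universally_mono (fun _ _ g hg => hg.injective) f H'⟩
    have haff : IsAffineHom f := isAffineHom_of_universally_isHomeomorph f H'
    exact ⟨isIntegralHom_of_isAffineHom_of_universallyClosed f, hsurj, hinj⟩
  · rintro ⟨hi, hs, hu⟩
    intro X' Y' i₁ i₂ f' hpb
    have hi' : IsIntegralHom f' := MorphismProperty.of_isPullback hpb.flip hi
    have hs' : Surjective f' := MorphismProperty.of_isPullback hpb.flip hs
    have hu' : UniversallyInjective f' := MorphismProperty.of_isPullback hpb.flip hu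
    refine isHomeomorph_iff_continuous_isClosedMap_bijective.mpr
      ⟨f'.continuous, isClosedMap_of_isIntegralHom f', f'.injective, hs'.1⟩
end

section
/- The subset W(R)_rat of W(R) consisting of rational power series (quotients p(t)/q(t) of polynomials with constant term 1) is a subring of the ring of big Witt vectors W(R), when R is a field (or more generally for rational functions over a commutative ring). -/
open PowerSeries

/-- The underlying set of the ring of big Witt vectors of `R`:
power series with constant term `1`. -/
def WittV (R : Type) [CommRing R] : Type :=
  {f : PowerSeries R // PowerSeries.constantCoeff f = 1}

/-- Functoriality of `WittV`. -/
noncomputable def WittMap {R S : Type} [CommRing R] [CommRing S] (φ : R →+* S) :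
    WittV R → WittV S :=
  fun f => ⟨PowerSeries.map φ f.1, by
    rw [← PowerSeries.coeff_zero_eq_constantCoeff_apply, PowerSeries.coeff_map,
      PowerSeries.coeff_zero_eq_constantCoeff_apply, f.2, map_one]⟩

/-- The Witt vector `1 + a·t`. -/
noncomputable def lin {R : Type} [CommRing R] (a : R) : WittV R :=
  ⟨1 + PowerSeries.C a * PowerSeries.X, by simp⟩

/-- The addition of an explicitly given commutative ring structure. -/
def addOf {α : Type} (inst : CommRing α) : α → α → α := by
  letI := inst; exact fun a b => a + b

/-- The multiplication of an explicitly given commutative ring structure. -/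
def mulOf {α : Type} (inst : CommRing α) : α → α → α := by
  letI := inst; exact fun a b => a * b

/-- The unit of an explicitly given commutative ring structure. -/
def oneOf {α : Type} (inst : CommRing α) : α := by
  letI := inst; exact 1

/-- A Witt vector is rational if it is a quotient of two polynomials with
constant coefficient `1`. -/
def IsRatW {R : Type} [CommRing R] (f : WittV R) : Prop :=
  ∃ p q : Polynomial R, p.coeff 0 = 1 ∧ q.coeff 0 = 1 ∧
    f.1 * (q : PowerSeries R) = (p : PowerSeries R)

def IsRatW' {R : Type} [CommRing R] (f : PowerSeries R) : Prop :=
  ∃ p q : Polynomial R, p.coeff 0 = 1 ∧ q.coeff 0 = 1 ∧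
    f * (q : PowerSeries R) = (p : PowerSeries R)

namespace RatWittAux

variable {K : Type} [Field K]

section ringstr

variable [instV : CommRing (WittV K)]
variable (ha : ∀ f g : WittV K, (f + g).1 = f.1 * g.1)

include ha

lemma zero_val : (0 : WittV K).1 = 1 := by
  have h := ha 0 0
  rw [add_zero] at h
  have h0 : ((0 : WittV K)).1 ≠ 0 := by
    intro hh
    have h2 := (0 : WittV K).2
    rw [hh] at h2
    simp at h2
  exact (mul_left_cancel₀ h0 (by rw [mul_one, ← h])).symm

lemma neg_val (f : WittV K) : f.1 * (-f).1 = 1 := by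
  have h := ha f (-f)
  rw [add_neg_cancel] at h
  rw [← h, zero_val ha]

lemma rat_zero : IsRatW (0 : WittV K) :=
  ⟨1, 1, by simp, by simp, by rw [zero_val ha, Polynomial.coe_one, mul_one]⟩

lemma rat_add {f g : WittV K} (hf : IsRatW f) (hg : IsRatW g) : IsRatW (f + g) := by
  obtain ⟨p, q, hp, hq, he⟩ := hf
  obtain ⟨p', q', hp', hq', he'⟩ := hg
  refine ⟨p * p', q * q', by rw [Polynomial.mul_coeff_zero, hp, hp', one_mul],
    by rw [Polynomial.mul_coeff_zero, hq, hq', one_mul], ?_⟩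
  rw [ha, Polynomial.coe_mul, Polynomial.coe_mul, ← he, ← he']
  ring

lemma rat_neg {f : WittV K} (hf : IsRatW f) : IsRatW (-f) := by
  obtain ⟨p, q, hp, hq, he⟩ := hf
  refine ⟨q, p, hq, hp, ?_⟩
  calc (-f).1 * (p : PowerSeries K) = (-f).1 * (f.1 * (q : PowerSeries K)) := by rw [he]
    _ = (f.1 * (-f).1) * (q : PowerSeries K) := by ring
    _ = (q : PowerSeries K) := by rw [neg_val ha, one_mul]

lemma rat_sub {f g : WittV K} (hf : IsRatW f) (hg : IsRatW g) : IsRatW (f - g) := by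
  rw [sub_eq_add_neg]
  exact rat_add ha hf (rat_neg ha hg)

end ringstr

lemma rat_lin [instV : CommRing (WittV K)] (a : K) : IsRatW (lin a) := by
  refine ⟨1 + Polynomial.C a * Polynomial.X, 1, by simp, by simp, ?_⟩
  rw [Polynomial.coe_one, mul_one]
  simp [lin, Polynomial.coe_add, Polynomial.coe_one, Polynomial.coe_mul,
    Polynomial.coe_C, Polynomial.coe_X]


section ringstr2

variable [instV : CommRing (WittV K)]
variable (ha : ∀ f g : WittV K, (f + g).1 = f.1 * g.1)

include ha

lemma rat_linsum (s : Multiset K) : IsRatW ((s.map lin).sum : WittV K) := by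
  induction s using Multiset.induction_on with
  | empty => simpa using rat_zero ha
  | cons a s ih =>
    rw [Multiset.map_cons, Multiset.sum_cons]
    exact rat_add ha (rat_lin a) ih

lemma exists_linsum [IsAlgClosed K] :
    ∀ (n : ℕ) (p : Polynomial K), p.natDegree = n → p.coeff 0 = 1 →
      ∃ s : Multiset K, (p : PowerSeries K) = ((s.map lin).sum : WittV K).1 := by
  intro n
  induction n using Nat.strong_induction_on with
  | _ n ih =>
    intro p hdeg hp0
    rcases Nat.eq_zero_or_pos n with h0 | hpos
    · subst h0
      have hpC : p = 1 := by
        rw [Polynomial.eq_C_of_natDegree_eq_zero hdeg, hp0, Polynomial.C_1]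
      refine ⟨0, ?_⟩
      rw [hpC, Polynomial.coe_one]
      simp [zero_val ha]
    · have hdne : p.degree ≠ 0 := by
        intro h
        rw [Polynomial.natDegree_eq_zero_iff_degree_le_zero.mpr h.le] at hdeg
        omega
      obtain ⟨r, hr⟩ := IsAlgClosed.exists_root p hdne
      have hr0 : r ≠ 0 := by
        intro h
        subst h
        rw [Polynomial.IsRoot, ← Polynomial.coeff_zero_eq_eval_zero, hp0] at hr
        exact one_ne_zero hr
      obtain ⟨p₁, hfac⟩ := Polynomial.dvd_iff_isRoot.mpr hr
      have hp1ne : p₁ ≠ 0 := by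
        intro h
        rw [h, mul_zero] at hfac
        rw [hfac] at hp0
        simp at hp0
      have hdp : n = 1 + p₁.natDegree := by
        rw [← hdeg, hfac, Polynomial.natDegree_mul (Polynomial.X_sub_C_ne_zero r) hp1ne,
          Polynomial.natDegree_X_sub_C]
      have h1 : (-r⁻¹) * (-r) = 1 := by field_simp
      have hC : (1 + Polynomial.C (-r⁻¹) * Polynomial.X) * Polynomial.C (-r)
          = Polynomial.X - Polynomial.C r := by
        rw [add_mul, one_mul, mul_right_comm, ← Polynomial.C_mul, h1, Polynomial.C_1, one_mul,
          Polynomial.C_neg]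
        ring
      have hkey : p = (1 + Polynomial.C (-r⁻¹) * Polynomial.X) * (Polynomial.C (-r) * p₁) := by
        rw [hfac, ← hC]; ring
      have hp₂0 : (Polynomial.C (-r) * p₁).coeff 0 = 1 := by
        have h2 : p.coeff 0 = (Polynomial.C (-r) * p₁).coeff 0 := by
          rw [hkey, Polynomial.mul_coeff_zero]
          simp
        rw [← h2, hp0]
      have hp₂d : (Polynomial.C (-r) * p₁).natDegree < n := by
        rw [Polynomial.natDegree_C_mul (neg_ne_zero.mpr hr0)]
        omega
      obtain ⟨s₂, hs₂⟩ := ih _ hp₂d _ rfl hp₂0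
      refine ⟨(-r⁻¹) ::ₘ s₂, ?_⟩
      rw [Multiset.map_cons, Multiset.sum_cons, ha, hkey, Polynomial.coe_mul, ← hs₂]
      congr 1
      simp [lin, Polynomial.coe_add, Polynomial.coe_one, Polynomial.coe_mul,
        Polynomial.coe_C, Polynomial.coe_X]

lemma rat_to_linsums [IsAlgClosed K] {f : WittV K} (hf : IsRatW f) :
    ∃ s t : Multiset K, f = ((s.map lin).sum : WittV K) - (t.map lin).sum := by
  obtain ⟨p, q, hp, hq, he⟩ := hf
  obtain ⟨s, hs⟩ := exists_linsum ha p.natDegree p rfl hp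
  obtain ⟨t, ht⟩ := exists_linsum ha q.natDegree q rfl hq
  refine ⟨s, t, ?_⟩
  have : (f + (t.map lin).sum : WittV K) = (s.map lin).sum := by
    apply Subtype.ext
    rw [ha, ← ht, ← hs, he]
  exact eq_sub_of_add_eq this

lemma rat_mul [IsAlgClosed K]
    (hm : ∀ a b : K, lin a * lin b = lin (a * b))
    {f g : WittV K} (hf : IsRatW f) (hg : IsRatW g) : IsRatW (f * g) := by
  have hlu : ∀ (a : K) (u : Multiset K), IsRatW (lin a * ((u.map lin).sum : WittV K)) := by
    intro a u
    induction u using Multiset.induction_on with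
    | empty => simpa using rat_zero ha
    | cons b u ih =>
      rw [Multiset.map_cons, Multiset.sum_cons, mul_add, hm]
      exact rat_add ha (rat_lin _) ih
  have hsu : ∀ (s u : Multiset K),
      IsRatW (((s.map lin).sum : WittV K) * (u.map lin).sum) := by
    intro s u
    induction s using Multiset.induction_on with
    | empty => simpa using rat_zero ha
    | cons a s ih =>
      rw [Multiset.map_cons, Multiset.sum_cons, add_mul]
      exact rat_add ha (hlu a u) ih
  obtain ⟨s, t, hst⟩ := rat_to_linsums ha hf
  obtain ⟨u, v, huv⟩ := rat_to_linsums ha hg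
  have hexp : f * g =
      (((s.map lin).sum : WittV K) * (u.map lin).sum + ((t.map lin).sum : WittV K) * (v.map lin).sum)
      - (((s.map lin).sum : WittV K) * (v.map lin).sum + ((t.map lin).sum : WittV K) * (u.map lin).sum) := by
    rw [hst, huv]; ring
  rw [hexp]
  exact rat_sub ha (rat_add ha (hsu s u) (hsu t v)) (rat_add ha (hsu s v) (hsu t u))

end ringstr2

lemma rat_map {L : Type} [Field L] (φ : K →+* L) {f : WittV K} (hf : IsRatW f) :
    IsRatW (WittMap φ f) := by
  obtain ⟨p, q, hp, hq, he⟩ := hf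
  have cm : ∀ r : Polynomial K, ((r.map φ : Polynomial L) : PowerSeries L)
      = PowerSeries.map φ (r : PowerSeries K) := by
    intro r
    ext n
    simp [Polynomial.coeff_coe, PowerSeries.coeff_map, Polynomial.coeff_map]
  refine ⟨p.map φ, q.map φ, by rw [Polynomial.coeff_map, hp, map_one],
    by rw [Polynomial.coeff_map, hq, map_one], ?_⟩
  show PowerSeries.map φ f.1 * _ = _
  rw [cm, cm, ← map_mul, he]


lemma exists_pi_poly {L : Type} [Field L] (g : L → K) (hg : g 0 = 0) (Q : Polynomial L) :
    ∃ q : Polynomial K, ∀ n, q.coeff n = g (Q.coeff n) := by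
  classical
  refine ⟨∑ n ∈ Q.support, Polynomial.C (g (Q.coeff n)) * Polynomial.X ^ n, ?_⟩
  intro k
  rw [Polynomial.finset_sum_coeff]
  simp only [Polynomial.coeff_C_mul, Polynomial.coeff_X_pow, mul_ite, mul_one, mul_zero]
  rw [Finset.sum_ite_eq Q.support k fun n => g (Q.coeff n)]
  by_cases hk : k ∈ Q.support
  · simp [hk]
  · simp [hk, Polynomial.notMem_support_iff.mp hk, hg]

lemma descend {L : Type} [Field L] (φ : K →+* L) (f : PowerSeries K)
    (P Q : Polynomial L) (hP : P.coeff 0 = 1) (hQ : Q.coeff 0 = 1)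
    (hE : PowerSeries.map φ f * (Q : PowerSeries L) = (P : PowerSeries L)) :
    IsRatW' f := by
  letI : Algebra K L := φ.toAlgebra
  have halg : ∀ a : K, algebraMap K L a = φ a := fun a => rfl
  obtain ⟨π, hπ⟩ := (Algebra.linearMap K L).exists_leftInverse_of_injective
    (LinearMap.ker_eq_bot.mpr (by
      have : (Algebra.linearMap K L : K → L) = φ := rfl
      rw [show ((Algebra.linearMap K L : K →ₗ[K] L) : K → L) = φ from rfl]
      exact φ.injective))
  have hπφ : ∀ a : K, π (φ a) = a := fun a => LinearMap.congr_fun hπ a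
  have hπs : ∀ (a : K) (x : L), π (φ a * x) = a * π x := by
    intro a x
    have := π.map_smul a x
    rwa [Algebra.smul_def, halg, smul_eq_mul] at this
  obtain ⟨q, hqc⟩ := exists_pi_poly (fun x => π x) (map_zero π) Q
  obtain ⟨p, hpc⟩ := exists_pi_poly (fun x => π x) (map_zero π) P
  refine ⟨p, q, by rw [hpc, hP]; simpa using hπφ 1,
    by rw [hqc, hQ]; simpa using hπφ 1, ?_⟩
  ext n
  have hn := congrArg (fun z => PowerSeries.coeff n z) hE
  simp only [PowerSeries.coeff_mul, Polynomial.coeff_coe, PowerSeries.coeff_map] at hn ⊢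
  calc ∑ x ∈ Finset.HasAntidiagonal.antidiagonal n, PowerSeries.coeff x.1 f * q.coeff x.2
      = ∑ x ∈ Finset.HasAntidiagonal.antidiagonal n, π (φ (PowerSeries.coeff x.1 f) * Q.coeff x.2) := by
        refine Finset.sum_congr rfl fun x _ => ?_
        rw [hqc, hπs]
    _ = π (∑ x ∈ Finset.HasAntidiagonal.antidiagonal n, φ (PowerSeries.coeff x.1 f) * Q.coeff x.2) := by
        rw [map_sum]
    _ = π (P.coeff n) := by rw [hn]
    _ = p.coeff n := (hpc n).symm

end RatWittAux

/-- The rational Witt vectors form a subring of the ring of big Witt vectors,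
over a field `K`.  Here the ring of big Witt vectors is given by any family of
commutative ring structures on `W(R) = 1 + tR[[t]]` whose addition is
multiplication of power series, whose unit is `1 + t`, and whose
multiplication `∗` is functorial in `R` and satisfies
`(1+at) ∗ (1+bt) = 1+abt`. -/
theorem rational_witt_vectors_subring
    (m : ∀ (R : Type) [CommRing R], WittV R → WittV R → WittV R)
    (hfun : ∀ (R S : Type) [CommRing R] [CommRing S] (φ : R →+* S) (f g : WittV R),
      WittMap φ (m R f g) = m S (WittMap φ f) (WittMap φ g))
    (hlin : ∀ (R : Type) [CommRing R] (a b : R), m R (lin a) (lin b) = lin (a * b))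
    (instW : ∀ (R : Type) [CommRing R], CommRing (WittV R))
    (hadd : ∀ (R : Type) [CommRing R] (f g : WittV R),
      (addOf (instW R) f g).1 = f.1 * g.1)
    (hmul : ∀ (R : Type) [CommRing R] (f g : WittV R), mulOf (instW R) f g = m R f g)
    (hone : ∀ (R : Type) [CommRing R], (oneOf (instW R)).1 = 1 + PowerSeries.X)
    (K : Type) [Field K] :
    ∃ S : @Subring (WittV K) (instW K).toNonAssocRing, ∀ f : WittV K, f ∈ S ↔ IsRatW f := by
  classical
  letI := instW K
  letI := instW (AlgebraicClosure K)
  have ha : ∀ f g : WittV K, (f + g).1 = f.1 * g.1 := hadd K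
  have haL : ∀ f g : WittV (AlgebraicClosure K), (f + g).1 = f.1 * g.1 :=
    hadd (AlgebraicClosure K)
  have hmL : ∀ a b : AlgebraicClosure K, lin a * lin b = lin (a * b) := fun a b =>
    (hmul (AlgebraicClosure K) (lin a) (lin b)).trans (hlin (AlgebraicClosure K) a b)
  refine ⟨{ carrier := {f | IsRatW f}
          , one_mem' := ?_
          , mul_mem' := ?_
          , zero_mem' := RatWittAux.rat_zero ha
          , add_mem' := fun hf hg => RatWittAux.rat_add ha hf hg
          , neg_mem' := fun hf => RatWittAux.rat_neg ha hf }, fun f => Iff.rfl⟩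
  · intro f g hf hg
    have hfg : WittMap (algebraMap K (AlgebraicClosure K)) (f * g)
        = WittMap (algebraMap K (AlgebraicClosure K)) f
          * WittMap (algebraMap K (AlgebraicClosure K)) g := by
      have h1 : f * g = m K f g := hmul K f g
      have h2 : WittMap (algebraMap K (AlgebraicClosure K)) f
            * WittMap (algebraMap K (AlgebraicClosure K)) g
          = m (AlgebraicClosure K) (WittMap (algebraMap K (AlgebraicClosure K)) f)
            (WittMap (algebraMap K (AlgebraicClosure K)) g) :=
        hmul (AlgebraicClosure K) _ _
      rw [h1, h2, hfun]
    have hrat : IsRatW (WittMap (algebraMap K (AlgebraicClosure K)) (f * g)) := by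
      rw [hfg]
      exact RatWittAux.rat_mul haL hmL (RatWittAux.rat_map _ hf) (RatWittAux.rat_map _ hg)
    obtain ⟨P, Q, hP, hQ, hE⟩ := hrat
    exact RatWittAux.descend (algebraMap K (AlgebraicClosure K)) (f * g).1 P Q hP hQ hE
  · refine ⟨1 + Polynomial.X, 1, by simp, by simp, ?_⟩
    have h1 : (1 : WittV K).1 = 1 + PowerSeries.X := hone K
    rw [h1, Polynomial.coe_one, mul_one, Polynomial.coe_add, Polynomial.coe_one,
      Polynomial.coe_X]
end
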